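/- If t_{α₁} t_{α₂} ⋯ t_{α_ℓ} is a shortest factorization of a Coxeter element of W into reflections (where α_i ∈ Φ⁺), then {α₁, α₂, ..., α_ℓ} is a linear basis of V. -/

import Mathlib

open scoped RealInnerProductSpace
open Module

noncomputable section

variable {V : Type*} [NormedAddCommGroup V] [InnerProductSpace ℝ V]

/-- `g` acts as the orthogonal reflection in the hyperplane orthogonal to `α`. -/
def reflFormula (α : V) (g : V ≃ₗᵢ[ℝ] V) : Prop :=
  ∀ v, g v = v - (2 * ⟪α, v⟫ / ⟪α, α⟫) • α

/-- `g` is an orthogonal reflection. -/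
def IsReflection (g : V ≃ₗᵢ[ℝ] V) : Prop :=
  ∃ α : V, α ≠ 0 ∧ reflFormula α g

/-- A finite real reflection group: a finite subgroup of the orthogonal group
generated by its reflections. -/
def IsReflectionGroup (W : Subgroup (V ≃ₗᵢ[ℝ] V)) : Prop :=
  Finite W ∧ Subgroup.closure {g | g ∈ W ∧ IsReflection g} = W

/-- Reflection length: the least `k` such that `w` is a product of `k` reflections. -/
def refLen (W : Subgroup (V ≃ₗᵢ[ℝ] V)) (w : W) : ℕ :=
  sInf {k | ∃ l : List W, l.length = k ∧ (∀ t ∈ l, IsReflection (t : W).1) ∧ l.prod = w}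

/-- The absolute order on `W`. -/
def absLe (W : Subgroup (V ≃ₗᵢ[ℝ] V)) (u v : W) : Prop :=
  refLen W u + refLen W (u⁻¹ * v) = refLen W v

/-- Covering relation of the absolute order. -/
def covers (W : Subgroup (V ≃ₗᵢ[ℝ] V)) (u v : W) : Prop :=
  absLe W u v ∧ u ≠ v ∧ ∀ z, absLe W u z → absLe W z v → z = u ∨ z = v

/-- The fixed subspace of an isometry. -/
def fixedSpace (g : V ≃ₗᵢ[ℝ] V) : Submodule ℝ V where
  carrier := {v | g v = v}
  add_mem' := by
    intro a b ha hb
    simp only [Set.mem_setOf_eq, map_add] at *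
    rw [ha, hb]
  zero_mem' := by simp
  smul_mem' := by
    intro c a ha
    simp only [Set.mem_setOf_eq, map_smul] at *
    rw [ha]

/-- A root system for the reflection group `W`. -/
def IsRootSystemFor (W : Subgroup (V ≃ₗᵢ[ℝ] V)) (Φ : Set V) : Prop :=
  Φ.Finite ∧ (∀ α ∈ Φ, α ≠ 0) ∧ (∀ α ∈ Φ, -α ∈ Φ) ∧
  (∀ α ∈ Φ, ∀ c : ℝ, c • α ∈ Φ → c = 1 ∨ c = -1) ∧
  (∀ α ∈ Φ, ∃ t ∈ W, reflFormula α t) ∧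
  (∀ t ∈ W, IsReflection t → ∃ α ∈ Φ, reflFormula α t) ∧
  (∀ g ∈ W, ∀ α ∈ Φ, g α ∈ Φ)

/-- A simple system for `Φ`: roots `σ 1, …, σ ℓ` which are linearly independent and
such that every root is a nonnegative or nonpositive combination of them. -/
def IsSimpleSystem (Φ : Set V) {ℓ : ℕ} (σ : Fin ℓ → V) : Prop :=
  (∀ i, σ i ∈ Φ) ∧ LinearIndependent ℝ σ ∧
  ∀ α ∈ Φ, (∃ c : Fin ℓ → ℝ, (∀ i, 0 ≤ c i) ∧ α = ∑ i, c i • σ i) ∨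
           (∃ c : Fin ℓ → ℝ, (∀ i, 0 ≤ c i) ∧ -α = ∑ i, c i • σ i)

/-- `γ` is a Coxeter element of `W`: a product, in some order, of the reflections in
the `ℓ` simple roots of some simple system of the root system `Φ`. -/
def IsCoxeterElement (W : Subgroup (V ≃ₗᵢ[ℝ] V)) (Φ : Set V) (ℓ : ℕ) (γ : W) : Prop :=
  ∃ σ : Fin ℓ → V, IsSimpleSystem Φ σ ∧
    ∃ t : Fin ℓ → W, (∀ i, reflFormula (σ i) (t i).1) ∧
      ∃ l : List (Fin ℓ), l.Nodup ∧ (∀ i, i ∈ l) ∧ (l.map t).prod = γ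

/-- `l` is a maximal (saturated) chain from `u` to `v` in the absolute order. -/
def IsMaximalChain (W : Subgroup (V ≃ₗᵢ[ℝ] V)) (u v : W) (l : List W) : Prop :=
  l.head? = some u ∧ l.getLast? = some v ∧ l.Chain' (covers W)

/-- The label of a chain under the natural edge labeling `λ (x, y) = x⁻¹ * y`. -/
def chainLabels (W : Subgroup (V ≃ₗᵢ[ℝ] V)) (l : List W) : List W :=
  l.zipWith (fun x y => x⁻¹ * y) l.tail

end

section Aux

variable {V : Type*} [NormedAddCommGroup V] [InnerProductSpace ℝ V]

lemma refl_involutive {α : V} {g : V ≃ₗᵢ[ℝ] V} (h : reflFormula α g) (v : V) :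
    g (g v) = v := by
  by_cases hα : α = 0
  · rw [h v, h (v - (2 * ⟪α, v⟫ / ⟪α, α⟫) • α)]
    subst hα; simp
  · have hαα : ⟪α, α⟫ ≠ 0 := fun hc => hα (inner_self_eq_zero.mp hc)
    rw [h v, h (v - (2 * ⟪α, v⟫ / ⟪α, α⟫) • α)]
    have hin : ⟪α, v - (2 * ⟪α, v⟫ / ⟪α, α⟫) • α⟫
        = ⟪α, v⟫ - (2 * ⟪α, v⟫ / ⟪α, α⟫) * ⟪α, α⟫ := by
      rw [inner_sub_right, real_inner_smul_right]
    rw [hin]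
    have hc : 2 * (⟪α, v⟫ - 2 * ⟪α, v⟫ / ⟪α, α⟫ * ⟪α, α⟫) / ⟪α, α⟫
        = -(2 * ⟪α, v⟫ / ⟪α, α⟫) := by
      field_simp
      ring
    rw [hc]
    module

lemma prod_fixes (L : List (V ≃ₗᵢ[ℝ] V)) (v : V) (h : ∀ g ∈ L, g v = v) :
    L.prod v = v := by
  induction L with
  | nil => simp
  | cons a L ih =>
    rw [List.prod_cons]
    have : (a * L.prod) v = a (L.prod v) := rfl
    rw [this, ih (fun g hg => h g (List.mem_cons_of_mem a hg)), h a List.mem_cons_self]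

lemma sub_prod_mem_span {n : ℕ} (β : Fin n → V) (g : Fin n → V ≃ₗᵢ[ℝ] V)
    (h : ∀ i, reflFormula (β i) (g i)) (v : V) :
    v - (List.ofFn g).prod v ∈ Submodule.span ℝ (Set.range β) := by
  induction n generalizing v with
  | zero => simp
  | succ n ih =>
    rw [List.ofFn_succ, List.prod_cons]
    set u := (List.ofFn fun i : Fin n => g i.succ).prod with hu
    have h0 : (g 0 * u) v = g 0 (u v) := rfl
    rw [h0, h 0 (u v)]
    have heq : v - (u v - (2 * ⟪β 0, u v⟫ / ⟪β 0, β 0⟫) • β 0)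
        = (v - u v) + (2 * ⟪β 0, u v⟫ / ⟪β 0, β 0⟫) • β 0 := by abel
    rw [heq]
    refine Submodule.add_mem _ ?_ (Submodule.smul_mem _ _
      (Submodule.subset_span ⟨0, rfl⟩))
    have := ih (fun i => β i.succ) (fun i => g i.succ) (fun i => h i.succ) v
    refine Submodule.span_mono ?_ this
    rintro x ⟨i, rfl⟩; exact ⟨i.succ, rfl⟩

lemma fixed_orth {n : ℕ} (β : Fin n → V) (g : Fin n → V ≃ₗᵢ[ℝ] V)
    (h : ∀ i, reflFormula (β i) (g i)) (hli : LinearIndependent ℝ β)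
    (v : V) (hv : (List.ofFn g).prod v = v) : ∀ i, ⟪β i, v⟫ = 0 := by
  induction n generalizing v with
  | zero => exact fun i => i.elim0
  | succ n ih =>
    rw [List.ofFn_succ, List.prod_cons] at hv
    set u := (List.ofFn fun i : Fin n => g i.succ).prod with hu
    have h0 : (g 0 * u) v = g 0 (u v) := rfl
    rw [h0] at hv
    have huv : u v = g 0 v := by
      have := congrArg (g 0) hv
      rwa [refl_involutive (h 0) (u v)] at this
    have hβ0 : β 0 ≠ 0 := hli.ne_zero 0
    have hβ0i : ⟪β 0, β 0⟫ ≠ 0 := fun hc => hβ0 (inner_self_eq_zero.mp hc)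
    have hmem : (2 * ⟪β 0, v⟫ / ⟪β 0, β 0⟫) • β 0
        ∈ Submodule.span ℝ (Set.range fun i : Fin n => β i.succ) := by
      have hsub := sub_prod_mem_span (fun i => β i.succ) (fun i => g i.succ)
        (fun i => h i.succ) v
      rw [← hu] at hsub
      rw [huv, h 0 v] at hsub
      have : v - (v - (2 * ⟪β 0, v⟫ / ⟪β 0, β 0⟫) • β 0)
          = (2 * ⟪β 0, v⟫ / ⟪β 0, β 0⟫) • β 0 := by abel
      rwa [this] at hsub
    have hnot : β 0 ∉ Submodule.span ℝ (Set.range fun i : Fin n => β i.succ) := by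
      have := hli.notMem_span_image (s := {i : Fin (n + 1) | i ≠ 0}) (x := 0) (by simp)
      intro hc
      apply this
      refine Submodule.span_mono ?_ hc
      rintro x ⟨i, rfl⟩
      exact ⟨i.succ, by simp [Fin.succ_ne_zero], rfl⟩
    have hc0 : 2 * ⟪β 0, v⟫ / ⟪β 0, β 0⟫ = 0 := by
      by_contra hc
      exact hnot (by
        have := Submodule.smul_mem _ (2 * ⟪β 0, v⟫ / ⟪β 0, β 0⟫)⁻¹ hmem
        rwa [smul_smul, inv_mul_cancel₀ hc, one_smul] at this)
    have hβ0v : ⟪β 0, v⟫ = 0 := by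
      field_simp at hc0
      linarith
    have huvv : u v = v := by rw [huv, h 0 v, hβ0v]; simp
    intro i
    refine Fin.cases ?_ ?_ i
    · exact hβ0v
    · intro j
      exact ih (fun i => β i.succ) (fun i => g i.succ) (fun i => h i.succ)
        (hli.comp Fin.succ (Fin.succ_injective n)) v huvv j

end Aux

/-- If `t_{α₁} ⋯ t_{α_ℓ}` is a shortest factorization of a Coxeter element into
reflections (with `α i ∈ Φ⁺`), then `α₁, …, α_ℓ` is a linear basis of `V`. -/
theorem statement11 {V : Type*} [NormedAddCommGroup V] [InnerProductSpace ℝ V]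
    [FiniteDimensional ℝ V]
    (W : Subgroup (V ≃ₗᵢ[ℝ] V)) (hW : IsReflectionGroup W)
    (Φ Φpos : Set V) (hΦ : IsRootSystemFor W Φ)
    (hpos : ∃ f : V →ₗ[ℝ] ℝ, (∀ α ∈ Φ, f α ≠ 0) ∧ Φpos = {α ∈ Φ | 0 < f α})
    (ℓ : ℕ) (hℓ : Module.finrank ℝ V = ℓ)
    (γ : W) (hγ : IsCoxeterElement W Φ ℓ γ)
    (α : Fin ℓ → V) (hα : ∀ i, α i ∈ Φpos)
    (t : Fin ℓ → W) (ht : ∀ i, reflFormula (α i) (t i).1)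
    (hprod : (List.ofFn t).prod = γ) (hshort : refLen W γ = ℓ) :
    LinearIndependent ℝ α ∧ Submodule.span ℝ (Set.range α) = ⊤ := by
  classical
  obtain ⟨σ, ⟨hσΦ, hσli, hσdec⟩, t', ht', l, hnd, hall, hlprod⟩ := hγ
  -- the coercion of t' to isometries
  set f : Fin ℓ → (V ≃ₗᵢ[ℝ] V) := fun i => ((t' i : W) : V ≃ₗᵢ[ℝ] V) with hf
  have hget : Function.Injective l.get := List.nodup_iff_injective_get.mp hnd
  -- the roots and reflections along the list l
  set βl : Fin l.length → V := fun i => σ (l.get i) with hβl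
  set gl : Fin l.length → (V ≃ₗᵢ[ℝ] V) := fun i => f (l.get i) with hgl
  have hβli : LinearIndependent ℝ βl := hσli.comp l.get hget
  have hofn : List.ofFn gl = l.map f := by
    have : gl = f ∘ l.get := rfl
    rw [this, ← List.map_ofFn, List.ofFn_get]
  have hγcoe : ((γ : W) : V ≃ₗᵢ[ℝ] V) = (List.ofFn gl).prod := by
    rw [hofn, ← hlprod]
    rw [SubmonoidClass.coe_list_prod, List.map_map]
    rfl
  -- span of σ is everything
  have hσspan : Submodule.span ℝ (Set.range σ) = ⊤ := by
    rcases Nat.eq_zero_or_pos ℓ with h0 | hlpos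
    · subst h0
      have : Module.finrank ℝ V = 0 := hℓ
      rw [Submodule.eq_top_iff']
      intro v
      have : v = 0 := by
        have := Module.finrank_zero_iff (R := ℝ) (M := V) |>.mp this
        exact Subsingleton.elim v 0
      simp [this]
    · have : Nonempty (Fin ℓ) := ⟨⟨0, hlpos⟩⟩
      exact hσli.span_eq_top_of_card_eq_finrank (by simp [hℓ])
  -- Coxeter element has trivial fixed space
  have hfix : ∀ v : V, ((γ : W) : V ≃ₗᵢ[ℝ] V) v = v → v = 0 := by
    intro v hv
    rw [hγcoe] at hv
    have horthl := fixed_orth βl gl (fun i => ht' (l.get i)) hβli v hv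
    have horth : ∀ j, ⟪σ j, v⟫ = 0 := by
      intro j
      obtain ⟨i, hi⟩ := List.mem_iff_get.mp (hall j)
      have h2 := horthl i
      rw [hβl] at h2
      simp only [hi] at h2
      exact h2
    have hvv : ∀ w ∈ Submodule.span ℝ (Set.range σ), ⟪w, v⟫ = 0 := by
      intro w hw
      induction hw using Submodule.span_induction with
      | mem x hx => obtain ⟨j, rfl⟩ := hx; exact horth j
      | zero => simp
      | add x y _ _ hx hy => rw [inner_add_left, hx, hy, add_zero]
      | smul c x _ hx => rw [real_inner_smul_left, hx, mul_zero]
    have : ⟪v, v⟫ = 0 := hvv v (by rw [hσspan]; trivial)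
    exact inner_self_eq_zero.mp this
  -- span of α is everything
  have hαspan : Submodule.span ℝ (Set.range α) = ⊤ := by
    rw [← Submodule.orthogonal_eq_bot_iff, Submodule.eq_bot_iff]
    intro v hv
    apply hfix
    have hαorth : ∀ i, ⟪α i, v⟫ = 0 := fun i =>
      (Submodule.mem_orthogonal _ v).mp hv (α i) (Submodule.subset_span ⟨i, rfl⟩)
    have hγc2 : ((γ : W) : V ≃ₗᵢ[ℝ] V)
        = (List.ofFn fun i => ((t i : W) : V ≃ₗᵢ[ℝ] V)).prod := by
      rw [← hprod, SubmonoidClass.coe_list_prod, List.map_ofFn]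
      rfl
    rw [hγc2]
    apply prod_fixes
    intro g hg
    rw [List.mem_ofFn] at hg
    obtain ⟨i, rfl⟩ := hg
    rw [ht i v, hαorth i]
    simp
  refine ⟨?_, hαspan⟩
  exact linearIndependent_of_top_le_span_of_card_eq_finrank (le_of_eq hαspan.symm)
    (by simp [hℓ])
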